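/- For |q|<1, the theta function φ(q) := ∑_{n∈ℤ} q^{n²} satisfies the product identity φ(q) = E(q²)^5 / (E(q⁴)² E(q)²). -/

import Mathlib

open scoped BigOperators

noncomputable def E (q : ℂ) : ℂ := ∏' n : ℕ, (1 - q ^ (n + 1))

noncomputable def ramaf (a b : ℂ) : ℂ :=
  ∑' n : ℤ, a ^ (n * (n + 1) / 2) * b ^ (n * (n - 1) / 2)

noncomputable def phi (q : ℂ) : ℂ := ∑' n : ℤ, q ^ (n ^ 2)

noncomputable def psi (q : ℂ) : ℂ := ∑' n : ℤ, q ^ (2 * n ^ 2 - n)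

open Finset

namespace JTP

/-- denominator Pochhammer: ∏_{j<k} (1 - Q^(j+1)) -/
noncomputable def Dp (Q : ℂ) (k : ℕ) : ℂ := ∏ j ∈ range k, (1 - Q ^ (j + 1))

/-- numerator: ∏_{j<k} (1 - Q^(n-j)) -/
noncomputable def Np (Q : ℂ) (n k : ℕ) : ℂ := ∏ j ∈ range k, (1 - Q ^ (n - j))

/-- Gaussian binomial -/
noncomputable def qb (Q : ℂ) (n k : ℕ) : ℂ := Np Q n k / Dp Q k

lemma Np_zero_of_lt {Q : ℂ} {n k : ℕ} (h : n < k) : Np Q n k = 0 := by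
  refine Finset.prod_eq_zero (i := n) (mem_range.2 h) ?_
  simp

lemma qb_zero_of_lt {Q : ℂ} {n k : ℕ} (h : n < k) : qb Q n k = 0 := by
  rw [qb, Np_zero_of_lt h, zero_div]

lemma Dp_succ (Q : ℂ) (k : ℕ) : Dp Q (k + 1) = Dp Q k * (1 - Q ^ (k + 1)) :=
  prod_range_succ _ _

lemma Dp_ne_zero {Q : ℂ} (hQ : ‖Q‖ < 1) (k : ℕ) : Dp Q k ≠ 0 := by
  refine Finset.prod_ne_zero_iff.2 fun j _ => ?_
  intro h
  have h2 : Q ^ (j + 1) = 1 := by linear_combination -h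
  have := norm_pow Q (j+1) ▸ congrArg norm h2
  have hlt : ‖Q‖ ^ (j + 1) < 1 :=
    pow_lt_one₀ (norm_nonneg _) hQ (Nat.succ_ne_zero j)
  rw [this] at hlt
  simp at hlt

lemma Np_succ (Q : ℂ) (n k : ℕ) : Np Q n (k + 1) = Np Q n k * (1 - Q ^ (n - k)) :=
  prod_range_succ _ _

lemma Np_succ_top (Q : ℂ) (n k : ℕ) : Np Q (n + 1) (k + 1) = (1 - Q ^ (n + 1)) * Np Q n k := by
  rw [Np, prod_range_succ', Np, mul_comm]
  congr 1
  · refine prod_congr rfl fun j _ => ?_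
    congr 2
    omega

/-- Pascal recurrence for Gaussian binomials. -/
lemma qb_pascal {Q : ℂ} (hQ : ‖Q‖ < 1) (n k : ℕ) :
    qb Q (n + 1) (k + 1) = qb Q n (k + 1) + Q ^ (n - k) * qb Q n k := by
  rcases le_or_gt k n with hk | hk
  · have hD : Dp Q k ≠ 0 := Dp_ne_zero hQ k
    have hDk : (1 - Q ^ (k + 1)) ≠ 0 := by
      have := Dp_ne_zero hQ (k + 1)
      rw [Dp_succ] at this
      exact right_ne_zero_of_mul this
    have hpow : Q ^ (n - k) * Q ^ (k + 1) = Q ^ (n + 1) := by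
      rw [← pow_add]
      congr 1
      omega
    have key : (1 : ℂ) - Q ^ (n+1) = (1 - Q ^ (n - k)) + Q ^ (n - k) * (1 - Q ^ (k+1)) := by
      linear_combination hpow
    rw [qb, qb, qb, Np_succ_top, Np_succ, Dp_succ]
    field_simp
    linear_combination (Np Q n k) * key
  · rw [qb_zero_of_lt (by omega), qb_zero_of_lt (by omega), qb_zero_of_lt hk]
    ring

lemma triangle_succ (k : ℕ) : (k + 1) * k / 2 = k * (k - 1) / 2 + k := by
  rcases k with _ | k
  · rfl
  · have : (k + 2) * (k + 1) = (k + 1) * k + 2 * (k + 1) := by ring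
    rw [this, Nat.add_mul_div_left _ _ (by norm_num : 0 < 2)]
    simp only [Nat.add_sub_cancel]

/-- The finite q-binomial theorem. -/
lemma qbinomial_theorem {Q : ℂ} (hQ : ‖Q‖ < 1) (n : ℕ) (z : ℂ) :
    ∏ j ∈ range n, (1 + z * Q ^ j)
      = ∑ k ∈ range (n + 1), Q ^ (k * (k - 1) / 2) * qb Q n k * z ^ k := by
  induction n generalizing z with
  | zero => simp [qb, Np, Dp]
  | succ n ih =>
    rw [prod_range_succ, ih]
    rw [Finset.sum_range_succ' (fun k => Q ^ (k * (k - 1) / 2) * qb Q (n+1) k * z ^ k) (n+1)]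
    have h0 : Q ^ (0 * (0 - 1) / 2) * qb Q (n+1) 0 * z ^ 0 = 1 := by simp [qb, Np, Dp]
    have hsum : ∀ k ∈ range (n+1),
        Q ^ ((k+1) * ((k+1) - 1) / 2) * qb Q (n+1) (k+1) * z ^ (k+1)
        = Q ^ ((k+1) * ((k+1) - 1) / 2) * qb Q n (k+1) * z ^ (k+1)
          + (Q ^ (k * (k - 1) / 2) * qb Q n k * z ^ k) * (z * Q ^ n) := by
      intro k hk
      have hkn : k ≤ n := by simpa using Nat.lt_succ_iff.1 (mem_range.1 hk)
      rw [qb_pascal hQ]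
      have ht : (k+1) * ((k+1) - 1) / 2 = k * (k - 1) / 2 + k := by
        simpa using triangle_succ k
      have hpow : Q ^ ((k+1) * ((k+1) - 1) / 2) * Q ^ (n - k)
          = Q ^ (k * (k - 1) / 2) * Q ^ n := by
        rw [← pow_add, ← pow_add, ht]
        congr 1
        omega
      ring_nf
      ring_nf at hpow
      linear_combination (qb Q n k * z ^ (k+1)) * hpow
    rw [Finset.sum_congr rfl hsum, Finset.sum_add_distrib, h0]
    have hfin : (∑ k ∈ range (n+1),
        Q ^ ((k+1) * ((k+1) - 1) / 2) * qb Q n (k+1) * z ^ (k+1)) + 1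
        = ∑ k ∈ range (n+1), Q ^ (k * (k - 1) / 2) * qb Q n k * z ^ k := by
      have h1 := Finset.sum_range_succ' (fun k => Q ^ (k * (k - 1) / 2) * qb Q n k * z ^ k) (n + 1)
      have h2 := Finset.sum_range_succ (fun k => Q ^ (k * (k - 1) / 2) * qb Q n k * z ^ k) (n + 1)
      have h0' : Q ^ (0 * (0 - 1) / 2) * qb Q n 0 * z ^ 0 = 1 := by simp [qb, Np, Dp]
      have hz : Q ^ ((n+1) * ((n+1) - 1) / 2) * qb Q n (n+1) * z ^ (n+1) = 0 := by
        rw [qb_zero_of_lt (Nat.lt_succ_self n)]; ring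
      rw [h2] at h1
      linear_combination hz - h0' - h1
    rw [← Finset.sum_mul]
    linear_combination -hfin
open Finset

lemma zpow_sum₀ {q : ℂ} (hq : q ≠ 0) {α : Type*} (s : Finset α) (f : α → ℤ) :
    q ^ (∑ i ∈ s, f i) = ∏ i ∈ s, q ^ f i := by
  classical
  induction s using Finset.cons_induction with
  | empty => simp
  | cons a s ha ih => rw [Finset.sum_cons, Finset.prod_cons, zpow_add₀ hq, ih]

lemma sum_odd (m : ℕ) : ∑ j ∈ range m, (2 * (j:ℤ) + 1) = (m:ℤ) ^ 2 := by
  induction m with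
  | zero => simp
  | succ m ih =>
    rw [Finset.sum_range_succ, ih]
    push_cast
    ring

lemma cast_mul_pred (k : ℕ) : ((k * (k - 1) : ℕ) : ℤ) = (k:ℤ) * ((k:ℤ) - 1) := by
  cases k with
  | zero => simp
  | succ k => push_cast [Nat.succ_sub_one]; ring

lemma two_mul_tri (k : ℕ) : 2 * (k * (k - 1) / 2) = k * (k - 1) := by
  cases k with
  | zero => rfl
  | succ k =>
    rw [Nat.succ_sub_one]
    rcases Nat.even_or_odd k with he | ho
    · exact Nat.two_mul_div_two_of_even (he.mul_left _)
    · exact Nat.two_mul_div_two_of_even (by simpa [mul_comm] using Nat.even_mul_succ_self k)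

/-- The symmetric finite Jacobi identity. -/
lemma finite_id {q : ℂ} (hq0 : q ≠ 0) (hq : ‖q‖ < 1) (m : ℕ) :
    ∏ i ∈ range m, (1 + q ^ (2*i+1)) ^ 2
      = ∑ k ∈ range (2*m+1), qb (q^2) (2*m) k * q ^ (((k:ℤ) - (m:ℤ))^2) := by
  have hQ : ‖q ^ 2‖ < 1 := by
    rw [norm_pow]
    exact pow_lt_one₀ (norm_nonneg q) hq two_ne_zero
  have H := qbinomial_theorem hQ (2*m) (q ^ ((1:ℤ) - 2*m))
  have hterm : ∀ j : ℕ, 1 + q ^ ((1:ℤ) - 2*m) * (q^2)^j = 1 + q ^ (2*(j:ℤ) + 1 - 2*m) := by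
    intro j
    rw [← pow_mul, ← zpow_natCast q (2*j), ← zpow_add₀ hq0]
    congr 2
    push_cast
    ring
  rw [Finset.prod_congr rfl (fun j _ => hterm j)] at H
  -- split the product
  have hsplit : ∏ j ∈ range (2*m), (1 + q ^ (2*(j:ℤ) + 1 - 2*m))
      = q ^ (-(m:ℤ)^2) * ∏ i ∈ range m, (1 + q ^ (2*i+1)) ^ 2 := by
    rw [two_mul, Finset.prod_range_add]
    have hP2 : ∏ x ∈ range m, (1 + q ^ (2*((m + x : ℕ):ℤ) + 1 - 2*m))
        = ∏ x ∈ range m, (1 + q ^ (2*x+1)) := by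
      refine prod_congr rfl fun x _ => ?_
      congr 1
      rw [show (2*((m + x : ℕ):ℤ) + 1 - 2*m) = ((2*x+1 : ℕ) : ℤ) by push_cast; ring,
        zpow_natCast]
    have hP1 : ∏ x ∈ range m, (1 + q ^ (2*((x : ℕ):ℤ) + 1 - 2*m))
        = q ^ (-(m:ℤ)^2) * ∏ x ∈ range m, (1 + q ^ (2*x+1)) := by
      rw [← Finset.prod_range_reflect]
      have : ∀ x ∈ range m, (1 + q ^ (2*(((m - 1 - x : ℕ)):ℤ) + 1 - 2*m))
          = q ^ (-(2*(x:ℤ)+1)) * (1 + q ^ (2*x+1)) := by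
        intro x hx
        have hxm : x < m := mem_range.1 hx
        have hcast : (((m - 1 - x : ℕ)):ℤ) = (m:ℤ) - 1 - x := by
          have : m - 1 - x = m - (1 + x) := by omega
          rw [this]
          push_cast [Nat.cast_sub (by omega : 1 + x ≤ m)]
          ring
        rw [hcast, mul_add, mul_one, ← zpow_natCast q (2*x+1), ← zpow_add₀ hq0,
          show (2*((m:ℤ) - 1 - x) + 1 - 2*m) = -(2*(x:ℤ)+1) by ring,
          show (-(2*(x:ℤ)+1) + ((2*x+1 : ℕ) : ℤ)) = 0 by push_cast; ring]
        simp
        ring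
      rw [Finset.prod_congr rfl this, Finset.prod_mul_distrib, ← zpow_sum₀ hq0]
      congr 2
      rw [Finset.sum_neg_distrib, sum_odd]
    rw [hP1, hP2, mul_assoc]
    congr 1
    rw [← sq, ← Finset.prod_pow]
  rw [hsplit] at H
  -- transform the sum side
  have hsum : ∀ k ∈ range (2*m+1),
      (q^2) ^ (k * (k - 1) / 2) * qb (q^2) (2*m) k * (q ^ ((1:ℤ) - 2*m)) ^ k
      = q ^ (-(m:ℤ)^2) * (qb (q^2) (2*m) k * q ^ (((k:ℤ) - (m:ℤ))^2)) := by
    intro k _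
    rw [← pow_mul, two_mul_tri, ← zpow_natCast q (k*(k-1)), ← zpow_natCast (q ^ ((1:ℤ) - 2*m)) k,
      ← zpow_mul]
    rw [show (q : ℂ) ^ ((k*(k-1) : ℕ) : ℤ) * qb (q^2) (2*m) k * q ^ (((1:ℤ) - 2*m) * k)
        = (q ^ ((k*(k-1) : ℕ) : ℤ) * q ^ (((1:ℤ) - 2*m) * k)) * qb (q^2) (2*m) k by ring,
      ← zpow_add₀ hq0]
    rw [show q ^ (-(m:ℤ)^2) * (qb (q^2) (2*m) k * q ^ (((k:ℤ) - (m:ℤ))^2))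
        = (q ^ (-(m:ℤ)^2) * q ^ (((k:ℤ) - (m:ℤ))^2)) * qb (q^2) (2*m) k by ring,
      ← zpow_add₀ hq0]
    congr 2
    rw [cast_mul_pred]
    ring
  rw [Finset.sum_congr rfl hsum, ← Finset.mul_sum] at H
  exact mul_left_cancel₀ (zpow_ne_zero _ hq0) H

open Finset Filter Topology

/-! ### Multipliability helpers -/

lemma log_summable {f : ℕ → ℂ} (hf : Summable f) :
    Summable fun n => Complex.log (1 + f n) := by
  have h0 : Filter.Tendsto f atTop (nhds 0) := hf.tendsto_atTop_zero
  have hev : ∀ᶠ n in atTop, ‖Complex.log (1 + f n)‖ ≤ 3/2 * ‖f n‖ := by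
    filter_upwards [h0.eventually (Metric.ball_mem_nhds 0 (by norm_num : (0:ℝ) < 1/2))] with n hn
    have hn2 : ‖f n‖ ≤ 1/2 := le_of_lt (by simpa [dist_eq_norm] using hn)
    exact Complex.norm_log_one_add_half_le_self hn2
  exact Summable.of_norm_bounded_eventually_nat (hf.norm.mul_left (3/2)) hev

lemma mult_one_add {f : ℕ → ℂ} (hf : Summable f) (h1 : ∀ n, 1 + f n ≠ 0) :
    Multipliable (fun n => 1 + f n) :=
  Complex.multipliable_of_summable_log (log_summable hf)

lemma tprod_one_add_ne_zero {f : ℕ → ℂ} (hf : Summable f) (h1 : ∀ n, 1 + f n ≠ 0) :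
    (∏' n, (1 + f n)) ≠ 0 := by
  have h := Complex.cexp_tsum_eq_tprod (f := fun n => 1 + f n) h1 (log_summable hf)
  rw [← h]
  exact Complex.exp_ne_zero _

lemma real_log_summable {f : ℕ → ℝ} (hf : Summable f) (h1 : ∀ n, |f n| < 1) :
    Summable fun n => Real.log (1 + f n) := by
  have hc : Summable fun n => ((f n : ℂ)) := Complex.summable_ofReal.2 hf
  have h2 := (Complex.hasSum_re (log_summable hc).hasSum).summable
  refine h2.congr fun n => ?_
  rw [show (1 : ℂ) + (f n : ℂ) = ((1 + f n : ℝ) : ℂ) by push_cast; ring,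
    Complex.log_ofReal_re]

lemma real_pos {f : ℕ → ℝ} (h1 : ∀ n, |f n| < 1) (n : ℕ) : 0 < 1 + f n := by
  have := abs_lt.1 (h1 n); linarith

lemma real_multipliable {f : ℕ → ℝ} (hf : Summable f) (h1 : ∀ n, |f n| < 1) :
    Multipliable fun n => 1 + f n :=
  Real.multipliable_of_summable_log (f := fun n => 1 + f n) (real_pos h1) (real_log_summable hf h1)

lemma real_tprod_pos {f : ℕ → ℝ} (hf : Summable f) (h1 : ∀ n, |f n| < 1) :
    0 < ∏' n, (1 + f n) := by
  have h := Real.rexp_tsum_eq_tprod (f := fun n => 1 + f n) (real_pos h1) (real_log_summable hf h1)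
  rw [← h]
  exact Real.exp_pos _

lemma summable_pow {x : ℂ} (hx : ‖x‖ < 1) {g : ℕ → ℕ} (hg : ∀ n, n ≤ g n) :
    Summable fun n => x ^ g n := by
  refine Summable.of_norm_bounded (summable_geometric_of_lt_one (norm_nonneg x) hx)
    fun n => ?_
  rw [norm_pow]
  exact pow_le_pow_of_le_one (norm_nonneg x) hx.le (hg n)

lemma one_add_ne {c : ℂ} (h : ‖c‖ < 1) : 1 + c ≠ 0 := by
  intro h0
  have : c = -1 := by linear_combination h0
  rw [this] at h
  simp at h

lemma mult_pack {x : ℂ} (hx : ‖x‖ < 1) {g : ℕ → ℕ} (hg : ∀ n, n ≤ g n) (hg0 : ∀ n, g n ≠ 0)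
    (s : ℂ) (hs : ‖s‖ = 1) :
    Multipliable (fun n => 1 + s * x ^ g n) ∧ (∏' n, (1 + s * x ^ g n)) ≠ 0 := by
  have hsum : Summable fun n => s * x ^ g n := (summable_pow hx hg).mul_left s
  have hne : ∀ n, 1 + s * x ^ g n ≠ 0 := by
    intro n
    refine one_add_ne ?_
    rw [norm_mul, hs, one_mul, norm_pow]
    exact pow_lt_one₀ (norm_nonneg x) hx (hg0 n)
  exact ⟨mult_one_add hsum hne, tprod_one_add_ne_zero hsum hne⟩

lemma mult_sub {x : ℂ} (hx : ‖x‖ < 1) {g : ℕ → ℕ} (hg : ∀ n, n ≤ g n) (hg0 : ∀ n, g n ≠ 0) :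
    Multipliable (fun n => 1 - x ^ g n) ∧ (∏' n, (1 - x ^ g n)) ≠ 0 := by
  have h := mult_pack hx hg hg0 (-1) (by simp)
  have he : ∀ n, 1 + (-1) * x ^ g n = 1 - x ^ g n := fun n => by ring
  exact ⟨h.1.congr he, by rw [← tprod_congr he]; exact h.2⟩

lemma mult_add {x : ℂ} (hx : ‖x‖ < 1) {g : ℕ → ℕ} (hg : ∀ n, n ≤ g n) (hg0 : ∀ n, g n ≠ 0) :
    Multipliable (fun n => 1 + x ^ g n) ∧ (∏' n, (1 + x ^ g n)) ≠ 0 := by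
  have h := mult_pack hx hg hg0 1 (by simp)
  have he : ∀ n, 1 + 1 * x ^ g n = 1 + x ^ g n := fun n => by ring
  exact ⟨h.1.congr he, by rw [← tprod_congr he]; exact h.2⟩

/-! ### Real bounds on partial products -/

lemma real_summable_pow {r : ℝ} (h0 : 0 ≤ r) (h1 : r < 1) :
    Summable fun n : ℕ => r ^ (n + 1) := by
  refine Summable.of_norm_bounded (summable_geometric_of_lt_one h0 h1) fun n => ?_
  rw [Real.norm_eq_abs, abs_of_nonneg (pow_nonneg h0 _)]
  exact pow_le_pow_of_le_one h0 h1.le (Nat.le_succ n)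

lemma abs_pow_lt {r : ℝ} (h0 : 0 ≤ r) (h1 : r < 1) (n : ℕ) : |r ^ (n+1)| < 1 := by
  rw [abs_of_nonneg (pow_nonneg h0 _)]
  exact pow_lt_one₀ h0 h1 (Nat.succ_ne_zero n)

lemma dR_bounds {r : ℝ} (h0 : 0 ≤ r) (h1 : r < 1) :
    ∃ c C : ℝ, 0 < c ∧ 0 < C ∧ (∀ k, c ≤ ∏ j ∈ range k, (1 - r ^ (j+1)))
      ∧ ∀ k, (∏ j ∈ range k, (1 + r ^ (j+1))) ≤ C := by
  have hs := real_summable_pow h0 h1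
  have habs : ∀ n : ℕ, |(-(r ^ (n+1)))| < 1 := fun n => by
    rw [abs_neg]; exact abs_pow_lt h0 h1 n
  have habs' : ∀ n : ℕ, |r ^ (n+1)| < 1 := abs_pow_lt h0 h1
  have hcongr : ∀ n : ℕ, 1 + (-(r ^ (n+1))) = 1 - r ^ (n+1) := fun n => by ring
  have hmc : Multipliable fun n : ℕ => 1 - r ^ (n+1) :=
    (real_multipliable hs.neg habs).congr hcongr
  have hmC : Multipliable fun n : ℕ => 1 + r ^ (n+1) := real_multipliable hs habs'
  refine ⟨∏' n : ℕ, (1 - r ^ (n+1)), ∏' n : ℕ, (1 + r ^ (n+1)), ?_, ?_, ?_, ?_⟩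
  · rw [← tprod_congr hcongr]
    exact real_tprod_pos hs.neg habs
  · exact real_tprod_pos hs habs'
  · intro k
    refine Antitone.le_of_tendsto (f := fun k => ∏ j ∈ range k, (1 - r ^ (j+1))) ?_
      hmc.hasProd.tendsto_prod_nat k
    refine antitone_nat_of_succ_le fun n => ?_
    rw [prod_range_succ]
    have hnn : (0:ℝ) ≤ ∏ j ∈ range n, (1 - r ^ (j+1)) :=
      Finset.prod_nonneg fun j _ => by have := habs' j; have := abs_lt.1 this; linarith
    have : 1 - r ^ (n+1) ≤ 1 := by nlinarith [pow_nonneg h0 (n+1)]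
    nlinarith
  · intro k
    refine Monotone.ge_of_tendsto (f := fun k => ∏ j ∈ range k, (1 + r ^ (j+1))) ?_
      hmC.hasProd.tendsto_prod_nat k
    refine monotone_nat_of_le_succ fun n => ?_
    rw [prod_range_succ]
    have hnn : (0:ℝ) ≤ ∏ j ∈ range n, (1 + r ^ (j+1)) :=
      Finset.prod_nonneg fun j _ => by nlinarith [pow_nonneg h0 (j+1)]
    nlinarith [pow_nonneg h0 (n+1)]

lemma Dp_bounds {Q : ℂ} (hQ : ‖Q‖ < 1) :
    ∃ c C : ℝ, 0 < c ∧ 0 < C ∧ ∀ k, c ≤ ‖Dp Q k‖ ∧ ‖Dp Q k‖ ≤ C := by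
  obtain ⟨c, C, hc, hC, h1, h2⟩ := dR_bounds (norm_nonneg Q) hQ
  refine ⟨c, C, hc, hC, fun k => ⟨?_, ?_⟩⟩
  · refine le_trans (h1 k) ?_
    rw [Dp, norm_prod]
    refine Finset.prod_le_prod (fun j _ => ?_) fun j _ => ?_
    · have := abs_pow_lt (norm_nonneg Q) hQ j
      rw [abs_of_nonneg (pow_nonneg (norm_nonneg Q) _)] at this
      linarith
    · calc 1 - ‖Q‖ ^ (j+1) = ‖(1:ℂ)‖ - ‖Q ^ (j+1)‖ := by rw [norm_one, norm_pow]
        _ ≤ ‖1 - Q ^ (j+1)‖ := norm_sub_norm_le _ _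
  · refine le_trans ?_ (h2 k)
    rw [Dp, norm_prod]
    refine Finset.prod_le_prod (fun j _ => norm_nonneg _) fun j _ => ?_
    calc ‖1 - Q ^ (j+1)‖ ≤ ‖(1:ℂ)‖ + ‖Q ^ (j+1)‖ := norm_sub_le _ _
      _ = 1 + ‖Q‖ ^ (j+1) := by rw [norm_one, norm_pow]

/-! ### qb as a ratio of Dp's, uniform bound -/

lemma Np_mul_Dp {Q : ℂ} {n k : ℕ} (hk : k ≤ n) : Np Q n k * Dp Q (n - k) = Dp Q n := by
  induction k with
  | zero => simp [Np, Dp]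
  | succ k ih =>
    have hk' : k ≤ n := Nat.le_of_succ_le hk
    have e : (n - (k+1)) + 1 = n - k := by omega
    calc Np Q n (k+1) * Dp Q (n-(k+1))
        = Np Q n k * ((1 - Q ^ (n-k)) * Dp Q (n-(k+1))) := by rw [Np_succ]; ring
      _ = Np Q n k * Dp Q (n-k) := by
          rw [← e, Dp_succ, e]; ring
      _ = Dp Q n := ih hk'

lemma qb_eq_div {Q : ℂ} (hQ : ‖Q‖ < 1) {n k : ℕ} (hk : k ≤ n) :
    qb Q n k = Dp Q n / (Dp Q (n - k) * Dp Q k) := by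
  rw [qb, ← Np_mul_Dp hk, mul_comm (Dp Q (n-k)) (Dp Q k)]
  rw [mul_div_mul_right _ _ (Dp_ne_zero hQ (n-k))]

lemma qb_bound {Q : ℂ} (hQ : ‖Q‖ < 1) :
    ∃ Cb : ℝ, 0 < Cb ∧ ∀ n k, ‖qb Q n k‖ ≤ Cb := by
  obtain ⟨c, C, hc, hC, hb⟩ := Dp_bounds hQ
  refine ⟨C / (c * c), by positivity, fun n k => ?_⟩
  rcases le_or_gt k n with hk | hk
  · rw [qb_eq_div hQ hk, norm_div, norm_mul]
    refine div_le_div₀ (le_of_lt (by positivity)) ((hb n).2) (by positivity) ?_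
    exact mul_le_mul (hb _).1 (hb _).1 hc.le (le_trans hc.le (hb _).1)
  · rw [qb_zero_of_lt hk, norm_zero]
    positivity

open Finset Filter Topology

lemma main_id {q : ℂ} (hq0 : q ≠ 0) (hq : ‖q‖ < 1) :
    phi q = (∏' n : ℕ, (1 - (q^2)^(n+1))) * ∏' n : ℕ, (1 + q^(2*n+1))^2 := by
  have hQ : ‖q^2‖ < 1 := by
    rw [norm_pow]; exact pow_lt_one₀ (norm_nonneg q) hq two_ne_zero
  have hEN := mult_sub hQ (g := fun n => n + 1) (fun n => Nat.le_succ n)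
    (fun n => Nat.succ_ne_zero n)
  set Q := q^2 with hQdef
  set EQ := ∏' n : ℕ, (1 - Q^(n+1)) with hEQdef
  have hEQ0 : EQ ≠ 0 := hEN.2
  have hDlim : Tendsto (fun r : ℕ => Dp Q r) atTop (𝓝 EQ) :=
    hEN.1.hasProd.tendsto_prod_nat
  obtain ⟨Cb, hCb, hqb⟩ := qb_bound hQ
  set f : ℕ → ℤ → ℂ :=
    fun m k => if -(m:ℤ) ≤ k then qb Q (2*m) ((k+m).toNat) * q^(k^2) else 0 with hf
  -- each tsum is the finite symmetric sum
  have hfin : ∀ m : ℕ, ∑' k : ℤ, f m k = ∏ i ∈ range m, (1 + q^(2*i+1))^2 := by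
    intro m
    rw [finite_id hq0 hq m]
    have hsupp : ∀ k : ℤ, k ∉ Finset.Icc (-(m:ℤ)) (m:ℤ) → f m k = 0 := by
      intro k hk
      simp only [Finset.mem_Icc, not_and_or, not_le] at hk
      rcases hk with h | h
      · exact if_neg (by omega)
      · have h2 : 2*m < (k+m).toNat := by omega
        simp only [hf]
        rw [if_pos (by omega), qb_zero_of_lt h2, zero_mul]
    rw [tsum_eq_sum hsupp]
    refine Finset.sum_nbij' (i := fun k => (k + (m:ℤ)).toNat) (j := fun i => (i : ℤ) - m)
      ?_ ?_ ?_ ?_ ?_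
    · intro a ha
      simp only [Finset.mem_Icc] at ha
      simp only [Finset.mem_range]
      try dsimp only
      omega
    · intro a ha
      simp only [Finset.mem_range] at ha
      simp only [Finset.mem_Icc]
      try dsimp only
      omega
    · intro a ha
      simp only [Finset.mem_Icc] at ha
      try dsimp only
      omega
    · intro a ha
      simp only [Finset.mem_range] at ha
      try dsimp only
      omega
    · intro a ha
      simp only [Finset.mem_Icc] at ha
      simp only [hf]
      try dsimp only
      rw [if_pos (by omega : -(m:ℤ) ≤ a),
        Int.toNat_of_nonneg (by omega : (0:ℤ) ≤ a + m)]
      congr 2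
      ring
  -- pointwise limit
  have hlim : ∀ k : ℤ, Tendsto (fun m : ℕ => f m k) atTop (𝓝 (q^(k^2) / EQ)) := by
    intro k
    have hEE : EQ * EQ ≠ 0 := mul_ne_zero hEQ0 hEQ0
    have ha1 : Tendsto (fun m : ℕ => 2*m) atTop atTop :=
      tendsto_atTop_atTop.2 fun b => ⟨b, fun a ha => by omega⟩
    have ha2 : Tendsto (fun m : ℕ => ((m:ℤ) - k).toNat) atTop atTop :=
      tendsto_atTop_atTop.2 fun b => ⟨b + k.natAbs, fun a ha => by omega⟩
    have ha3 : Tendsto (fun m : ℕ => (k + (m:ℤ)).toNat) atTop atTop :=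
      tendsto_atTop_atTop.2 fun b => ⟨b + k.natAbs, fun a ha => by omega⟩
    have hT : Tendsto (fun m : ℕ =>
        Dp Q (2*m) / (Dp Q ((m:ℤ)-k).toNat * Dp Q ((k + (m:ℤ)).toNat)) * q^(k^2)) atTop
        (𝓝 (EQ / (EQ * EQ) * q^(k^2))) :=
      ((hDlim.comp ha1).div ((hDlim.comp ha2).mul (hDlim.comp ha3)) hEE).mul_const _
    have heq : ∀ᶠ m : ℕ in atTop, f m k
        = Dp Q (2*m) / (Dp Q ((m:ℤ)-k).toNat * Dp Q ((k + (m:ℤ)).toNat)) * q^(k^2) := by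
      filter_upwards [eventually_ge_atTop k.natAbs] with m hm
      have h1 : -(m:ℤ) ≤ k := by omega
      have h2 : (k+(m:ℤ)).toNat ≤ 2*m := by omega
      simp only [hf]
      rw [if_pos h1, qb_eq_div hQ h2,
        show 2*m - (k+(m:ℤ)).toNat = ((m:ℤ)-k).toNat from by omega]
    have hval : EQ / (EQ * EQ) * q^(k^2) = q^(k^2) / EQ := by
      field_simp
    rw [← hval]
    exact hT.congr' (heq.mono fun m h => h.symm)
  -- uniform bound
  have hbound : ∀ m : ℕ, ∀ k : ℤ, ‖f m k‖ ≤ Cb * ‖q‖ ^ k.natAbs := by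
    intro m k
    simp only [hf]
    split_ifs with h
    · rw [norm_mul]
      have h1 : ‖q ^ (k^2)‖ ≤ ‖q‖ ^ k.natAbs := by
        rw [show k^2 = ((k.natAbs^2 : ℕ) : ℤ) by push_cast [Int.natAbs_sq]; rw [sq_abs],
          zpow_natCast, norm_pow]
        exact pow_le_pow_of_le_one (norm_nonneg q) hq.le (Nat.le_self_pow two_ne_zero _)
      exact mul_le_mul (hqb _ _) h1 (norm_nonneg _) hCb.le
    · rw [norm_zero]
      positivity
  have hBsum : Summable (fun k : ℤ => Cb * ‖q‖ ^ k.natAbs) := by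
    apply Summable.of_nat_of_neg
    · simpa using (summable_geometric_of_lt_one (norm_nonneg q) hq).mul_left Cb
    · simpa using (summable_geometric_of_lt_one (norm_nonneg q) hq).mul_left Cb
  have hTan := tendsto_tsum_of_dominated_convergence (f := fun (m : ℕ) (k : ℤ) => f m k)
    (g := fun k : ℤ => q^(k^2) / EQ) hBsum hlim (Eventually.of_forall hbound)
  have hA : Multipliable (fun i : ℕ => (1 + q^(2*i+1))^2) := by
    have h := (mult_add hq (g := fun n => 2*n+1) (fun n => by beta_reduce; omega) (fun n => by beta_reduce; omega)).1
    exact (h.mul h).congr fun n => (sq _).symm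
  have hAlim : Tendsto (fun m => ∏ i ∈ range m, (1 + q^(2*i+1))^2) atTop
      (𝓝 (∏' i : ℕ, (1 + q^(2*i+1))^2)) := hA.hasProd.tendsto_prod_nat
  have huniq := tendsto_nhds_unique (hTan.congr hfin) hAlim
  have hphi : ∑' k : ℤ, q^(k^2) / EQ = phi q / EQ := by
    rw [phi, tsum_div_const]
  rw [hphi] at huniq
  rw [div_eq_iff hEQ0] at huniq
  rw [huniq]
  ring

lemma E_split {x : ℂ} (hx : ‖x‖ < 1) :
    (∏' n : ℕ, (1 - x^(2*n+1))) * E (x^2) = E x := by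
  have hx2 : ‖x^2‖ < 1 := by
    rw [norm_pow]; exact pow_lt_one₀ (norm_nonneg x) hx two_ne_zero
  have he : Multipliable (fun k : ℕ => 1 - x^(2*k+1)) :=
    (mult_sub hx (g := fun n => 2*n+1) (fun n => by beta_reduce; omega) (fun n => by beta_reduce; omega)).1
  have ho' : Multipliable (fun k : ℕ => 1 - (x^2)^(k+1)) :=
    (mult_sub hx2 (g := fun n => n+1) (fun n => Nat.le_succ n) (fun n => Nat.succ_ne_zero n)).1
  have hoeq : ∀ k : ℕ, 1 - (x^2)^(k+1) = 1 - x^(2*k+1+1) := by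
    intro k
    rw [← pow_mul, show 2*(k+1) = 2*k+1+1 from by omega]
  have ho : Multipliable (fun k : ℕ => 1 - x^(2*k+1+1)) := ho'.congr hoeq
  have h := tprod_even_mul_odd (f := fun n => 1 - x^(n+1)) he ho
  rw [E, E, ← h]
  congr 1
  rw [← tprod_congr hoeq]

lemma PQ_mul {x : ℂ} (hx : ‖x‖ < 1) :
    (∏' n : ℕ, (1 - x^(2*n+1))) * (∏' n : ℕ, (1 + x^(2*n+1)))
      = ∏' n : ℕ, (1 - (x^2)^(2*n+1)) := by
  have hP := (mult_sub hx (g := fun n => 2*n+1) (fun n => by beta_reduce; omega) (fun n => by beta_reduce; omega)).1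
  have hQ := (mult_add hx (g := fun n => 2*n+1) (fun n => by beta_reduce; omega) (fun n => by beta_reduce; omega)).1
  rw [← Multipliable.tprod_mul hP hQ]
  refine tprod_congr fun n => ?_
  have h : x^(2*n+1) * x^(2*n+1) = (x^2)^(2*n+1) := by
    rw [← pow_add, ← pow_mul]
    congr 1
    omega
  linear_combination -h

end JTP

theorem phi_eta_quotient (q : ℂ) (hq : ‖q‖ < 1) :
    phi q = E (q ^ 2) ^ 5 / (E (q ^ 4) ^ 2 * E q ^ 2) := by
  rcases eq_or_ne q 0 with rfl | hq0
  · have hphi : phi 0 = 1 := by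
      rw [phi, tsum_eq_single 0]
      · norm_num
      · intro n hn
        exact zero_zpow _ (pow_ne_zero 2 hn)
    have hE : E 0 = 1 := by
      rw [E, tprod_congr (g := fun _ : ℕ => (1:ℂ))
        (fun n => by rw [zero_pow (Nat.succ_ne_zero n), sub_zero]), tprod_one]
    rw [hphi, show ((0:ℂ))^2 = 0 by norm_num, show ((0:ℂ))^4 = 0 by norm_num, hE]
    norm_num
  · have hq2 : ‖q^2‖ < 1 := by
      rw [norm_pow]; exact pow_lt_one₀ (norm_nonneg q) hq two_ne_zero
    have hq4 : ‖q^4‖ < 1 := by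
      rw [norm_pow]; exact pow_lt_one₀ (norm_nonneg q) hq (by norm_num)
    have hEq := JTP.mult_sub hq (g := fun n => n+1) (fun n => Nat.le_succ n)
      (fun n => Nat.succ_ne_zero n)
    have hEq2 := JTP.mult_sub hq2 (g := fun n => n+1) (fun n => Nat.le_succ n)
      (fun n => Nat.succ_ne_zero n)
    have hEq4 := JTP.mult_sub hq4 (g := fun n => n+1) (fun n => Nat.le_succ n)
      (fun n => Nat.succ_ne_zero n)
    have hAq := JTP.mult_add hq (g := fun n => 2*n+1) (fun n => by beta_reduce; omega)
      (fun n => by beta_reduce; omega)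
    have hEqne : E q ≠ 0 := hEq.2
    have hE2ne : E (q^2) ≠ 0 := hEq2.2
    have hE4ne : E (q^4) ≠ 0 := hEq4.2
    have hmain := JTP.main_id hq0 hq
    have hEdef : (∏' n : ℕ, (1 - (q^2)^(n+1))) = E (q^2) := rfl
    rw [hEdef] at hmain
    have hAsq : (∏' n : ℕ, (1 + q^(2*n+1))^2)
        = (∏' n : ℕ, (1 + q^(2*n+1))) * (∏' n : ℕ, (1 + q^(2*n+1))) := by
      rw [← Multipliable.tprod_mul hAq.1 hAq.1]
      exact tprod_congr fun n => sq _
    have h1 := JTP.E_split hq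
    have h2 := JTP.E_split hq2
    rw [show ((q^2)^2 : ℂ) = q^4 by ring] at h2
    have h3 := JTP.PQ_mul hq
    rw [hmain, hAsq, eq_div_iff (mul_ne_zero (pow_ne_zero 2 hE4ne) (pow_ne_zero 2 hEqne))]
    linear_combination
      (-(E (q^2) * (∏' n : ℕ, (1 + q^(2*n+1)))^2 * E (q^4)^2 * (E q + (∏' n : ℕ, (1 - q^(2*n+1))) * E (q^2)))) * h1
      + (E (q^2)^3 * E (q^4)^2 * ((∏' n : ℕ, (1 - q^(2*n+1))) * (∏' n : ℕ, (1 + q^(2*n+1))) + (∏' n : ℕ, (1 - (q^2)^(2*n+1))))) * h3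
      + (E (q^2)^3 * ((∏' n : ℕ, (1 - (q^2)^(2*n+1))) * E (q^4) + E (q^2))) * h2
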